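/- For every integer n ≥ 2, the cocktail party graph O_{2n} satisfies ζ_{O_{2n}}(u)^{-1} = (1 − u²)^{2n²−4n} · ((2n−3)²u⁴ + (4n−6)u³ + (4n−6)u² + 2u + 1)^{n−1} · ((2n−3)u² + 1) · ((2n−3)u² + (2−2n)u + 1) in ℤ[u]. -/

import Mathlib

open Polynomial Matrix

/-- The reciprocal of the Ihara zeta function of a finite simple graph `G`, as a polynomial
in `ℤ[u]`: `(1 - u²)^(r-1) * det(I - A·u + Q·u²)`, where `A` is the adjacency matrix,
`Q = D - I` with `D` the degree matrix, and `r - 1 = |E| - |V|`. -/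
noncomputable def iharaZetaInv {V : Type} [Fintype V] [DecidableEq V]
    (G : SimpleGraph V) [DecidableRel G.Adj] : Polynomial ℤ :=
  (1 - X ^ 2) ^ (G.edgeFinset.card - Fintype.card V) *
    ((1 : Matrix V V (Polynomial ℤ)) - (X : Polynomial ℤ) • G.adjMatrix (Polynomial ℤ) +
      (X ^ 2 : Polynomial ℤ) • Matrix.diagonal (fun v => (G.degree v : Polynomial ℤ) - 1)).det

/-- The cocktail party graph `O_{2n}`: the complement of a perfect matching on `2n` vertices.
Vertices are pairs `(i, a)` with `i : Fin n`, `a : Fin 2`, and `(i, a)` is adjacent to `(j, b)`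
exactly when `i ≠ j`. -/
def cocktailPartyGraph (n : ℕ) : SimpleGraph (Fin n × Fin 2) where
  Adj x y := x.1 ≠ y.1
  symm := ⟨fun _ _ h => h.symm⟩
  loopless := ⟨fun _ h => h rfl⟩

instance (n : ℕ) : DecidableRel (cocktailPartyGraph n).Adj :=
  fun x y => inferInstanceAs (Decidable (x.1 ≠ y.1))

lemma det_aux {K : Type} [Field K] (m : ℕ) (c d : K) (hc : c ≠ 0) (hcd : c + 2*d ≠ 0) :
    (Matrix.of fun x y : Fin (m+1) × Fin 2 =>
        (if x = y then c else 0) + (if x.1 = y.1 then d else 0) - d).det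
      = c ^ (m+1) * (c + 2*d) ^ m * (c + 2*d - 2*(m+1)*d) := by
  set B : Matrix (Fin (m+1) × Fin 2) (Fin (m+1) × Fin 2) K :=
    Matrix.of fun x y => (if x = y then c else 0) + (if x.1 = y.1 then d else 0) with hBdef
  have hM : (Matrix.of fun x y : Fin (m+1) × Fin 2 =>
        (if x = y then c else 0) + (if x.1 = y.1 then d else 0) - d)
      = B + Matrix.replicateCol Unit (fun _ : Fin (m+1) × Fin 2 => -d) * Matrix.replicateRow Unit (fun _ : Fin (m+1) × Fin 2 => (1:K)) := by
    ext x y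
    simp [Matrix.mul_apply, hBdef]
    ring
  have hB2 : B = (Matrix.blockDiagonal fun _ : Fin (m+1) =>
      (Matrix.of fun a b : Fin 2 => (if a = b then c else 0) + d)).submatrix
        (Equiv.prodComm (Fin (m+1)) (Fin 2)) (Equiv.prodComm (Fin (m+1)) (Fin 2)) := by
    ext x y
    simp [Matrix.blockDiagonal_apply, hBdef, Prod.ext_iff]
    by_cases h1 : x.1 = y.1 <;> by_cases h2 : x.2 = y.2 <;> simp [h1, h2]
  have hBdet : B.det = c^(m+1)*(c+2*d)^(m+1) := by
    rw [hB2, Matrix.det_submatrix_equiv_self, Matrix.det_blockDiagonal]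
    have : (Matrix.of fun a b : Fin 2 => (if a = b then c else 0) + d).det = c*(c+2*d) := by
      rw [Matrix.det_fin_two]
      simp
      ring
    simp [this, mul_pow]
  have hBunit : IsUnit B.det := by
    rw [hBdet]
    exact isUnit_iff_ne_zero.2 (mul_ne_zero (pow_ne_zero _ hc) (pow_ne_zero _ hcd))
  have h1 : B * Matrix.replicateCol Unit (fun _ : Fin (m+1) × Fin 2 => (1:K))
      = (c+2*d) • Matrix.replicateCol Unit (fun _ : Fin (m+1) × Fin 2 => (1:K)) := by
    ext x t
    simp [Matrix.mul_apply, hBdef, Fintype.sum_prod_type, Fin.sum_univ_two,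
      Finset.sum_add_distrib, Finset.sum_ite_eq, Prod.ext_iff]
    obtain ⟨i, a⟩ := x
    fin_cases a <;> simp [Finset.sum_ite_eq] <;> ring
  have hcol : B⁻¹ * Matrix.replicateCol Unit (fun _ : Fin (m+1) × Fin 2 => (1:K))
      = (c+2*d)⁻¹ • Matrix.replicateCol Unit (fun _ : Fin (m+1) × Fin 2 => (1:K)) := by
    have h2 := congrArg (fun Z => B⁻¹ * Z) h1
    simp only [← Matrix.mul_assoc, Matrix.nonsing_inv_mul B hBunit, Matrix.one_mul,
      Matrix.mul_smul] at h2
    calc B⁻¹ * Matrix.replicateCol Unit (fun _ : Fin (m+1) × Fin 2 => (1:K))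
        = (c+2*d)⁻¹ • ((c+2*d) • (B⁻¹ * Matrix.replicateCol Unit (fun _ : Fin (m+1) × Fin 2 => (1:K)))) := by
          rw [smul_smul, inv_mul_cancel₀ hcd, one_smul]
      _ = _ := by rw [← h2]
  have hcol' : Matrix.replicateCol Unit (fun _ : Fin (m+1) × Fin 2 => -d)
      = (-d) • Matrix.replicateCol Unit (fun _ : Fin (m+1) × Fin 2 => (1:K)) := by
    ext x t; simp
  rw [hM, Matrix.det_add_replicateCol_mul_replicateRow hBunit, hcol', Matrix.mul_smul, Matrix.mul_assoc,
    hcol, Matrix.mul_smul, smul_smul]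
  have hrc : (Matrix.replicateRow Unit (fun _ : Fin (m+1) × Fin 2 => (1:K)) *
      Matrix.replicateCol Unit (fun _ : Fin (m+1) × Fin 2 => (1:K))) = Matrix.of fun _ _ : Unit => (2*(m+1) : K) := by
    ext s t
    simp [Matrix.mul_apply]
    ring
  rw [hrc, hBdet, Matrix.det_unique]
  simp only [Matrix.add_apply, Matrix.smul_apply, Matrix.one_apply_eq, Matrix.of_apply,
    smul_eq_mul]
  field_simp
  ring

lemma det_aux_int (m : ℕ) (c d : Polynomial ℤ) (hc : c ≠ 0) (hcd : c + 2*d ≠ 0) :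
    (Matrix.of fun x y : Fin (m+1) × Fin 2 =>
        (if x = y then c else 0) + (if x.1 = y.1 then d else 0) - d).det
      = c ^ (m+1) * (c + 2*d) ^ m * (c + 2*d - 2*(m+1)*d) := by
  set K := FractionRing (Polynomial ℤ)
  have hinj : Function.Injective (algebraMap (Polynomial ℤ) K) :=
    IsFractionRing.injective _ _
  apply hinj
  rw [RingHom.map_det, RingHom.mapMatrix_apply]
  have hmap : (Matrix.of fun x y : Fin (m+1) × Fin 2 =>
        (if x = y then c else 0) + (if x.1 = y.1 then d else 0) - d).map
          (algebraMap (Polynomial ℤ) K)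
      = Matrix.of fun x y : Fin (m+1) × Fin 2 =>
        (if x = y then algebraMap (Polynomial ℤ) K c else 0)
          + (if x.1 = y.1 then algebraMap (Polynomial ℤ) K d else 0)
          - algebraMap (Polynomial ℤ) K d := by
    ext x y
    simp [apply_ite (algebraMap (Polynomial ℤ) K)]
  rw [hmap, det_aux m _ _ (by simpa using fun h => hc (hinj (by simpa using h)))
    (by
      intro h
      apply hcd
      apply hinj
      simpa [map_add, _root_.map_mul, map_ofNat] using h)]
  simp [_root_.map_mul, map_pow, map_add, map_sub, map_ofNat, map_natCast]

/-- For `n ≥ 2`, the Ihara zeta function of the cocktail party graph `O_{2n}`. -/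
theorem iharaZetaInv_cocktailPartyGraph (n : ℕ) (hn : 2 ≤ n) :
    iharaZetaInv (cocktailPartyGraph n) =
      (1 - X ^ 2) ^ (2 * n ^ 2 - 4 * n) *
        (C ((2 * (n : ℤ) - 3) ^ 2) * X ^ 4 + C (4 * (n : ℤ) - 6) * X ^ 3 +
            C (4 * (n : ℤ) - 6) * X ^ 2 + 2 * X + 1) ^ (n - 1) *
        (C (2 * (n : ℤ) - 3) * X ^ 2 + 1) *
        (C (2 * (n : ℤ) - 3) * X ^ 2 + C (2 - 2 * (n : ℤ)) * X + 1) := by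
  -- degrees
  have hdeg : ∀ v, (cocktailPartyGraph n).degree v = 2 * n - 2 := by
    intro v
    have hnb : (cocktailPartyGraph n).neighborFinset v
        = (Finset.univ.erase v.1) ×ˢ (Finset.univ : Finset (Fin 2)) := by
      ext y
      rw [SimpleGraph.mem_neighborFinset]
      simp [SimpleGraph.mem_neighborFinset, cocktailPartyGraph, Finset.mem_product,
        Finset.mem_erase, ne_comm]
    rw [SimpleGraph.degree, hnb, Finset.card_product, Finset.card_erase_of_mem
      (Finset.mem_univ _)]
    simp
    omega
  -- edge count
  have hcardV : Fintype.card (Fin n × Fin 2) = 2 * n := by simp; ring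
  have hedge : (cocktailPartyGraph n).edgeFinset.card = 2 * n ^ 2 - 2 * n := by
    have hsum := SimpleGraph.sum_degrees_eq_twice_card_edges (cocktailPartyGraph n)
    rw [Finset.sum_congr rfl (fun v _ => hdeg v), Finset.sum_const, Finset.card_univ,
      hcardV, smul_eq_mul] at hsum
    have hZ : (2 * (cocktailPartyGraph n).edgeFinset.card : ℤ)
        = 2 * n * (2 * n - 2) := by
      have h2 : (2:ℕ) ≤ 2 * n := by omega
      zify [h2] at hsum
      linarith [hsum]
    have hn' : (2:ℤ) ≤ (n:ℤ) := by exact_mod_cast hn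
    have : ((cocktailPartyGraph n).edgeFinset.card : ℤ) = 2 * (n:ℤ)^2 - 2*n := by
      nlinarith [hZ]
    have h4 : (2*n : ℕ) ≤ 2 * n^2 := by nlinarith
    zify [h4]
    linarith [this]
  have hexp : (cocktailPartyGraph n).edgeFinset.card - Fintype.card (Fin n × Fin 2)
      = 2 * n ^ 2 - 4 * n := by
    have h4 : (2*n : ℕ) ≤ 2 * n^2 := by nlinarith
    rw [hedge, hcardV]
    omega
  obtain ⟨m, rfl⟩ : ∃ m, n = m + 1 := ⟨n - 1, by omega⟩
  set c : Polynomial ℤ := 1 + C (2 * ((m:ℤ)+1) - 3) * X^2 with hc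
  have hmat : ((1 : Matrix (Fin (m+1) × Fin 2) (Fin (m+1) × Fin 2) (Polynomial ℤ))
        - (X : Polynomial ℤ) • (cocktailPartyGraph (m+1)).adjMatrix (Polynomial ℤ)
        + (X ^ 2 : Polynomial ℤ) • Matrix.diagonal
            (fun v => ((cocktailPartyGraph (m+1)).degree v : Polynomial ℤ) - 1))
      = Matrix.of fun x y : Fin (m+1) × Fin 2 =>
          (if x = y then c else 0) + (if x.1 = y.1 then X else 0) - X := by
    rw [← Matrix.ext_iff]
    intro x y
    have hdcast : (((2 * (m+1) - 2 : ℕ) : Polynomial ℤ)) - 1 = C (2 * ((m:ℤ)+1) - 3) := by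
      rw [Nat.cast_sub (by omega)]
      push_cast
      simp [map_sub, _root_.map_mul, map_add, map_ofNat, _root_.map_one, map_natCast]
      ring
    by_cases h1 : x = y
    · subst h1
      simp [Matrix.one_apply, Matrix.diagonal_apply, SimpleGraph.adjMatrix_apply,
        hdeg x, hdcast, hc]
      ring
    · by_cases h2 : x.1 = y.1
      · have hadj : ¬ (cocktailPartyGraph (m+1)).Adj x y := by
          simp [cocktailPartyGraph, h2]
        simp [Matrix.one_apply, Matrix.diagonal_apply, h1, h2, hadj]
      · have hadj : (cocktailPartyGraph (m+1)).Adj x y := h2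
        simp [Matrix.one_apply, Matrix.diagonal_apply, h1, h2, hadj]
  have hc0 : c ≠ 0 := by
    intro h
    have := congrArg (fun p => Polynomial.coeff p 0) h
    simp [hc, Polynomial.coeff_C_mul, Polynomial.coeff_X_pow] at this
  have hcd0 : c + 2 * X ≠ 0 := by
    intro h
    have := congrArg (fun p => Polynomial.coeff p 0) h
    simp [hc, Polynomial.coeff_C_mul, Polynomial.coeff_X_pow, Polynomial.coeff_X] at this
  rw [iharaZetaInv, hexp, hmat, det_aux_int m c X hc0 hcd0]
  simp only [Nat.add_sub_cancel]
  have hQ : (C ((2 * ((m:ℤ)+1) - 3) ^ 2) * X ^ 4 + C (4 * ((m:ℤ)+1) - 6) * X ^ 3 +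
      C (4 * ((m:ℤ)+1) - 6) * X ^ 2 + 2 * X + 1 : Polynomial ℤ) = c * (c + 2 * X) := by
    simp only [hc, map_sub, _root_.map_mul, map_add, map_ofNat, _root_.map_one, map_pow, map_natCast]
    ring
  have hlast : (C (2 * ((m:ℤ)+1) - 3) * X ^ 2 + C (2 - 2 * ((m:ℤ)+1)) * X + 1 : Polynomial ℤ)
      = c + 2 * X - 2 * ((m:ℤ[X]) + 1) * X := by
    simp only [hc, map_sub, _root_.map_mul, map_add, map_ofNat, _root_.map_one, map_natCast]
    push_cast
    ring
  have hcform : (C (2 * ((m:ℤ)+1) - 3) * X ^ 2 + 1 : Polynomial ℤ) = c := by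
    rw [hc]; ring
  push_cast
  rw [hQ, mul_pow, hlast, hcform]
  push_cast
  ring
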